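/- arXiv:1109.3799 — 2 statements merged into one kernel-verified Lean document; each statement's English description precedes it below -/
import Mathlib

section
/- There exist Q > 0 symmetric, τ > 0, and a diagonal matrix T > 0 satisfying the block matrix inequality [[AQ + QA^T - τBB^T + γ²D₁TD₁^T, Q],[Q, -T]] < 0 if and only if there exist Q > 0, T > 0 diagonal, and K ∈ ℝ^{p×n} such that (A+BK)Q + Q(A+BK)^T + γ²D₁TD₁^T + QT^{-1}Q < 0. -/
open Matrix

private lemma posDef_sub_smul {n : ℕ} {M S : Matrix (Fin n) (Fin n) ℝ}
    (hM : M.PosDef) (hS : S.PosSemidef) : ∃ ε : ℝ, 0 < ε ∧ (M - ε • S).PosDef := by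
  rcases Nat.eq_zero_or_pos n with hn | hn
  · refine ⟨1, one_pos, Matrix.PosDef.of_dotProduct_mulVec_pos (hM.1.sub (by
      rw [Matrix.IsHermitian, conjTranspose_smul, star_trivial, hS.1.eq])) fun x hx => absurd ?_ hx⟩
    subst hn; funext i; exact absurd i.2 (by omega)
  -- continuity of quadratic forms
  have qcont : ∀ N : Matrix (Fin n) (Fin n) ℝ,
      Continuous fun x : EuclideanSpace ℝ (Fin n) =>
        (WithLp.equiv 2 (Fin n → ℝ) x) ⬝ᵥ (N *ᵥ (WithLp.equiv 2 (Fin n → ℝ) x)) := by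
    intro N
    have h1 : Continuous fun x : Fin n → ℝ => x ⬝ᵥ (N *ᵥ x) := by
      simp only [dotProduct, mulVec]
      exact continuous_finset_sum _ fun i _ => (continuous_apply i).mul <|
        continuous_finset_sum _ fun j _ => continuous_const.mul (continuous_apply j)
    exact h1.comp (PiLp.continuous_ofLp 2 (fun _ : Fin n => ℝ))
  have hcomp : IsCompact (Metric.sphere (0 : EuclideanSpace ℝ (Fin n)) 1) :=
    isCompact_sphere 0 1
  have hne : (Metric.sphere (0 : EuclideanSpace ℝ (Fin n)) 1).Nonempty := by
    refine ⟨EuclideanSpace.single ⟨0, hn⟩ (1 : ℝ), ?_⟩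
    simp [EuclideanSpace.norm_single]
  obtain ⟨xm, hxm, hmin⟩ := hcomp.exists_isMinOn hne (qcont M).continuousOn
  obtain ⟨xM, hxM, hmax⟩ := hcomp.exists_isMaxOn hne (qcont S).continuousOn
  set f := fun x : EuclideanSpace ℝ (Fin n) =>
    (WithLp.equiv 2 (Fin n → ℝ) x) ⬝ᵥ (M *ᵥ (WithLp.equiv 2 (Fin n → ℝ) x)) with hf
  set g := fun x : EuclideanSpace ℝ (Fin n) =>
    (WithLp.equiv 2 (Fin n → ℝ) x) ⬝ᵥ (S *ᵥ (WithLp.equiv 2 (Fin n → ℝ) x)) with hg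
  have hm : 0 < f xm := by
    have hx0 : (WithLp.equiv 2 (Fin n → ℝ) xm) ≠ 0 := by
      intro h
      have : xm = 0 := by
        apply (WithLp.equiv 2 (Fin n → ℝ)).injective; simpa using h
      rw [this] at hxm; simp at hxm
    simpa [hf, star_trivial] using hM.dotProduct_mulVec_pos hx0
  have hC0 : 0 ≤ g xM := by simpa [hg, star_trivial] using hS.dotProduct_mulVec_nonneg (WithLp.equiv 2 (Fin n → ℝ) xM)
  set m := f xm
  set C := g xM
  refine ⟨m / (C + 1), by positivity, Matrix.PosDef.of_dotProduct_mulVec_pos (hM.1.sub (by rw [Matrix.IsHermitian, conjTranspose_smul, star_trivial, hS.1.eq] : ((m / (C+1)) • S).IsHermitian)) fun x hx => ?_⟩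
  set xe : EuclideanSpace ℝ (Fin n) := (WithLp.equiv 2 (Fin n → ℝ)).symm x with hxe
  have hxe0 : xe ≠ 0 := by
    intro h; apply hx
    have := congrArg (WithLp.equiv 2 (Fin n → ℝ)) h
    simpa [hxe] using this
  have hc : 0 < ‖xe‖ := norm_pos_iff.mpr hxe0
  obtain ⟨c, hceq, hc⟩ : ∃ c : ℝ, c = ‖xe‖ ∧ 0 < c := ⟨‖xe‖, rfl, hc⟩
  set u : EuclideanSpace ℝ (Fin n) := c⁻¹ • xe with hu
  have hus : u ∈ Metric.sphere (0 : EuclideanSpace ℝ (Fin n)) 1 := by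
    rw [mem_sphere_zero_iff_norm, hu, norm_smul, Real.norm_eq_abs, abs_inv, abs_of_pos hc,
      ← hceq]
    exact inv_mul_cancel₀ hc.ne'
  have hx_eq : x = c • (WithLp.equiv 2 (Fin n → ℝ) u) := by
    simp [hu, hxe, smul_smul, mul_inv_cancel₀ hc.ne']
  have key : ∀ N : Matrix (Fin n) (Fin n) ℝ,
      x ⬝ᵥ (N *ᵥ x) = c ^ 2 * ((WithLp.equiv 2 (Fin n → ℝ) u) ⬝ᵥ (N *ᵥ (WithLp.equiv 2 (Fin n → ℝ) u))) := by
    intro N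
    rw [hx_eq, mulVec_smul, dotProduct_smul, smul_dotProduct]
    simp [smul_eq_mul]; ring
  have h1 : m ≤ f u := hmin hus
  have h2 : g u ≤ C := hmax hus
  have expand : dotProduct (star x) ((M - (m / (C + 1)) • S) *ᵥ x)
      = x ⬝ᵥ (M *ᵥ x) - (m / (C + 1)) * (x ⬝ᵥ (S *ᵥ x)) := by
    rw [star_trivial, sub_mulVec, dotProduct_sub, smul_mulVec, dotProduct_smul,
      smul_eq_mul]
  rw [expand, key M, key S]
  have hc2 : 0 < c ^ 2 := by positivity
  have hfu : m ≤ (WithLp.equiv 2 (Fin n → ℝ) u) ⬝ᵥ (M *ᵥ (WithLp.equiv 2 (Fin n → ℝ) u)) := h1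
  have hgu : (WithLp.equiv 2 (Fin n → ℝ) u) ⬝ᵥ (S *ᵥ (WithLp.equiv 2 (Fin n → ℝ) u)) ≤ C := h2
  have hlt : (m / (C + 1)) * C < m := by
    rw [div_mul_eq_mul_div, div_lt_iff₀ (by linarith)]
    nlinarith
  nlinarith [mul_le_mul_of_nonneg_left hfu hc2.le,
    mul_le_mul_of_nonneg_left hgu (mul_nonneg (div_nonneg hm.le (by linarith : (0:ℝ) ≤ C + 1)) hc2.le),
    mul_pos hc2 (sub_pos.mpr hlt)]


open scoped Matrix in
private lemma posDef_fromBlocks₂₂' {m n : Type*} [Fintype m] [Fintype n] [DecidableEq n]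
    (A : Matrix m m ℝ) (B : Matrix m n ℝ) {D : Matrix n n ℝ} (hD : D.PosDef) :
    (Matrix.fromBlocks A B Bᴴ D).PosDef ↔ (A - B * D⁻¹ * Bᴴ).PosDef := by
  haveI := hD.isUnit.invertible
  simp only [Matrix.posDef_iff_dotProduct_mulVec]
  constructor
  · rintro ⟨h1, h2⟩
    refine ⟨(Matrix.IsHermitian.fromBlocks₂₂ A B hD.1).mp h1, fun x hx => ?_⟩
    have hv : (Sum.elim x (-((D⁻¹ * Bᴴ) *ᵥ x)) : m ⊕ n → ℝ) ≠ 0 := by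
      intro h; apply hx; funext i; exact congrFun h (Sum.inl i)
    have key := Matrix.schur_complement_eq₂₂ A B x (-((D⁻¹ * Bᴴ) *ᵥ x)) hD.1
    have h3 := h2 hv
    rw [dotProduct_mulVec, key, add_neg_cancel] at h3
    simpa [dotProduct_mulVec] using h3
  · rintro ⟨h1, h2⟩
    refine ⟨(Matrix.IsHermitian.fromBlocks₂₂ A B hD.1).mpr h1, fun v hv => ?_⟩
    rw [dotProduct_mulVec, ← Sum.elim_comp_inl_inr v,
      Matrix.schur_complement_eq₂₂ A B _ _ hD.1]
    by_cases hx : v ∘ Sum.inl = 0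
    · have hy : v ∘ Sum.inr ≠ 0 := by
        intro h; apply hv
        funext i; cases i with
        | inl i => exact congrFun hx i
        | inr i => exact congrFun h i
      have := hD.dotProduct_mulVec_pos hy
      rw [dotProduct_mulVec] at this
      simpa [hx] using this
    · have t1 : 0 ≤ star ((D⁻¹ * Bᴴ) *ᵥ v ∘ Sum.inl + v ∘ Sum.inr) ᵥ* D ⬝ᵥ
          ((D⁻¹ * Bᴴ) *ᵥ v ∘ Sum.inl + v ∘ Sum.inr) := by
        have := hD.posSemidef.dotProduct_mulVec_nonneg ((D⁻¹ * Bᴴ) *ᵥ v ∘ Sum.inl + v ∘ Sum.inr)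
        rwa [dotProduct_mulVec] at this
      have t2 : 0 < star (v ∘ Sum.inl) ᵥ* (A - B * D⁻¹ * Bᴴ) ⬝ᵥ v ∘ Sum.inl := by
        have := h2 hx
        rwa [dotProduct_mulVec] at this
      linarith

/-- There exist `Q > 0` symmetric, `τ > 0`, and a diagonal `T > 0` with
`[[A Q + Q Aᵀ - τ B Bᵀ + γ² D₁ T D₁ᵀ, Q], [Q, -T]] < 0` iff there exist `Q > 0`,
diagonal `T > 0`, and `K` with
`(A + B K) Q + Q (A + B K)ᵀ + γ² D₁ T D₁ᵀ + Q T⁻¹ Q < 0`. -/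
theorem lipschitz_lmi_iff_feedback
    {n p : ℕ} (A : Matrix (Fin n) (Fin n) ℝ) (B : Matrix (Fin n) (Fin p) ℝ)
    (D₁ : Matrix (Fin n) (Fin n) ℝ) (γ : ℝ) (hγ : 0 < γ) :
    (∃ (Q T : Matrix (Fin n) (Fin n) ℝ) (τ : ℝ) (d : Fin n → ℝ),
      Q.PosDef ∧ 0 < τ ∧ T = Matrix.diagonal d ∧ T.PosDef ∧
      (-(Matrix.fromBlocks
          (A * Q + Q * Aᵀ - τ • (B * Bᵀ) + (γ ^ 2) • (D₁ * T * D₁ᵀ)) Q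
          Q (-T))).PosDef) ↔
    (∃ (Q T : Matrix (Fin n) (Fin n) ℝ) (d : Fin n → ℝ)
        (K : Matrix (Fin p) (Fin n) ℝ),
      Q.PosDef ∧ T = Matrix.diagonal d ∧ T.PosDef ∧
      (-((A + B * K) * Q + Q * (A + B * K)ᵀ + (γ ^ 2) • (D₁ * T * D₁ᵀ) +
          Q * T⁻¹ * Q)).PosDef) := by
  constructor
  · rintro ⟨Q, T, τ, d, hQ, hτ, hTd, hT, hblock⟩
    have hQt : Qᵀ = Q := by
      rw [← Matrix.conjTranspose_eq_transpose_of_trivial]; exact hQ.1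
    have hQdet : IsUnit Q.det := (Matrix.isUnit_iff_isUnit_det Q).mp hQ.isUnit
    set R : Matrix (Fin n) (Fin n) ℝ := (γ ^ 2) • (D₁ * T * D₁ᵀ) with hR
    set M₀ : Matrix (Fin n) (Fin n) ℝ := A * Q + Q * Aᵀ - τ • (B * Bᵀ) + R with hM₀
    have hrw : (-(Matrix.fromBlocks M₀ Q Q (-T))) = Matrix.fromBlocks (-M₀) (-Q) (-Q)ᴴ T := by
      rw [Matrix.fromBlocks_neg, neg_neg, Matrix.conjTranspose_neg, hQ.1.eq]
    rw [hrw] at hblock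
    have hS := (posDef_fromBlocks₂₂' (-M₀) (-Q) hT).mp hblock
    have hS' : (-(M₀ + Q * T⁻¹ * Q)).PosDef := by
      have e : -M₀ - (-Q) * T⁻¹ * (-Q)ᴴ = -(M₀ + Q * T⁻¹ * Q) := by
        rw [Matrix.conjTranspose_neg, hQ.1.eq, Matrix.neg_mul, Matrix.mul_neg]
        simp only [neg_neg, Matrix.neg_mul]
        abel
      rwa [e] at hS
    refine ⟨Q, T, d, (-(τ/2)) • (Bᵀ * Q⁻¹), hQ, hTd, hT, ?_⟩
    set K : Matrix (Fin p) (Fin n) ℝ := (-(τ/2)) • (Bᵀ * Q⁻¹) with hK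
    have e1 : B * K * Q = (-(τ/2)) • (B * Bᵀ) := by
      rw [hK, Matrix.mul_smul, Matrix.smul_mul]
      congr 1
      rw [Matrix.mul_assoc, Matrix.mul_assoc, Matrix.nonsing_inv_mul Q hQdet, Matrix.mul_one]
    have eK : Kᵀ = (-(τ/2)) • (Q⁻¹ * B) := by
      rw [hK, Matrix.transpose_smul, Matrix.transpose_mul, Matrix.transpose_nonsing_inv, hQt,
        Matrix.transpose_transpose]
    have e2 : Q * (B * K)ᵀ = (-(τ/2)) • (B * Bᵀ) := by
      rw [Matrix.transpose_mul, eK, Matrix.smul_mul, Matrix.mul_smul]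
      congr 1
      rw [← Matrix.mul_assoc, ← Matrix.mul_assoc, Matrix.mul_nonsing_inv Q hQdet, Matrix.one_mul]
    have e0 : (A + B * K) * Q + Q * (A + B * K)ᵀ = A * Q + Q * Aᵀ - τ • (B * Bᵀ) := by
      rw [Matrix.add_mul, Matrix.transpose_add, Matrix.mul_add, e1, e2]
      have h5 : (-(τ/2) : ℝ) + -(τ/2) = -τ := by ring
      have : (-(τ/2) : ℝ) • (B * Bᵀ) + (-(τ/2) : ℝ) • (B * Bᵀ) = -(τ • (B * Bᵀ)) := by
        rw [← add_smul, h5, neg_smul]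
      rw [sub_eq_add_neg, ← this]
      abel
    have efin : (A + B * K) * Q + Q * (A + B * K)ᵀ + R + Q * T⁻¹ * Q = M₀ + Q * T⁻¹ * Q := by
      rw [e0, hM₀]
    rw [efin]
    exact hS'
  · rintro ⟨Q, T, d, K, hQ, hTd, hT, hfb⟩
    have hQt : Qᵀ = Q := by
      rw [← Matrix.conjTranspose_eq_transpose_of_trivial]; exact hQ.1
    set R : Matrix (Fin n) (Fin n) ℝ := (γ ^ 2) • (D₁ * T * D₁ᵀ) with hR
    have hS₀ : ((K * Q)ᵀ * (K * Q)).PosSemidef := by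
      rw [← Matrix.conjTranspose_eq_transpose_of_trivial]
      exact Matrix.posSemidef_conjTranspose_mul_self _
    obtain ⟨ε, hε, hNS⟩ := posDef_sub_smul hfb hS₀
    have hs : 0 < Real.sqrt ε := Real.sqrt_pos.mpr hε
    set s : ℝ := Real.sqrt ε with hsdef
    have hss : s * s = ε := Real.mul_self_sqrt hε.le
    set τ : ℝ := ε⁻¹ with hτdef
    have hτ : 0 < τ := inv_pos.mpr hε
    set W : Matrix (Fin p) (Fin n) ℝ := s⁻¹ • Bᵀ + s • (K * Q) with hWdef
    have hWpsd : (Wᵀ * W).PosSemidef := by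
      rw [← Matrix.conjTranspose_eq_transpose_of_trivial]
      exact Matrix.posSemidef_conjTranspose_mul_self _
    have hW : Wᵀ * W = τ • (B * Bᵀ) + B * (K * Q) + (K * Q)ᵀ * Bᵀ
        + ε • ((K * Q)ᵀ * (K * Q)) := by
      rw [hWdef]
      simp only [Matrix.transpose_add, Matrix.transpose_smul, Matrix.transpose_transpose,
        Matrix.add_mul, Matrix.mul_add, Matrix.smul_mul, Matrix.mul_smul, smul_add, smul_smul]
      rw [inv_mul_cancel₀ hs.ne', mul_inv_cancel₀ hs.ne', hss]
      have hsτ : s⁻¹ * s⁻¹ = τ := by rw [hτdef, ← hss, mul_inv]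
      rw [hsτ, one_smul, one_smul]
      abel
    have h1 : Q * (A + B * K)ᵀ = Q * Aᵀ + (K * Q)ᵀ * Bᵀ := by
      rw [Matrix.transpose_add, Matrix.mul_add, Matrix.transpose_mul K Q, hQt,
        Matrix.transpose_mul B K, ← Matrix.mul_assoc]
    have h2 : (A + B * K) * Q = A * Q + B * (K * Q) := by
      rw [Matrix.add_mul, Matrix.mul_assoc]
    have hX : -(A * Q + Q * Aᵀ - τ • (B * Bᵀ) + R) - Q * T⁻¹ * Q
        = (-((A + B * K) * Q + Q * (A + B * K)ᵀ + R + Q * T⁻¹ * Q)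
            - ε • ((K * Q)ᵀ * (K * Q))) + Wᵀ * W := by
      rw [hW, h1, h2]
      abel
    have hXpos : (-(A * Q + Q * Aᵀ - τ • (B * Bᵀ) + R) - Q * T⁻¹ * Q).PosDef := by
      rw [hX]
      exact hNS.add_posSemidef hWpsd
    refine ⟨Q, T, τ, d, hQ, hτ, hTd, hT, ?_⟩
    have hrw : (-(Matrix.fromBlocks (A * Q + Q * Aᵀ - τ • (B * Bᵀ) + R) Q Q (-T)))
        = Matrix.fromBlocks (-(A * Q + Q * Aᵀ - τ • (B * Bᵀ) + R)) (-Q) (-Q)ᴴ T := by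
      rw [Matrix.fromBlocks_neg, neg_neg, Matrix.conjTranspose_neg, hQ.1.eq]
    rw [hrw, posDef_fromBlocks₂₂' _ (-Q) hT]
    have e : -(A * Q + Q * Aᵀ - τ • (B * Bᵀ) + R) - (-Q) * T⁻¹ * (-Q)ᴴ
        = -(A * Q + Q * Aᵀ - τ • (B * Bᵀ) + R) - Q * T⁻¹ * Q := by
      rw [Matrix.conjTranspose_neg, hQ.1.eq, Matrix.neg_mul, Matrix.mul_neg]
      simp only [neg_neg, Matrix.neg_mul]
    rw [e]
    exact hXpos
end

section
/- Consider the single-integrator special case: A = 0, B = I_n, P = I_n, so F = -I_n and Γ = I_n. Under the adaptive protocol ẋ_i = -Σ_j c_{ij} a_{ij}(x_i - x_j), ċ_{ij} = κ_{ij} a_{ij} ‖x_i - x_j‖², with G connected undirected, κ_{ij} = κ_{ji} > 0, c_{ij}(0) = c_{ji}(0), the function V(t) = Σ_i ‖x_i(t) - x̄(t)‖² + Σ_{i≠j} (c_{ij}(t) - α)²/(2κ_{ij}) is non-increasing for α ≥ 1/λ₂, where λ₂ is the smallest nonzero Laplacian eigenvalue and x̄ = (1/N)Σ_j x_j. -/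
open Matrix


private lemma siL_const_on_Ici {f : ℝ → ℝ}
    (hf : ∀ t : ℝ, 0 ≤ t → HasDerivAt f 0 t) : ∀ t : ℝ, 0 ≤ t → f t = f 0 := by
  intro t ht
  exact constant_of_has_deriv_right_zero
    (fun y hy => (hf y hy.1).continuousAt.continuousWithinAt)
    (fun y hy => (hf y hy.1).hasDerivWithinAt) t (Set.right_mem_Icc.2 ht)

private lemma siL_antitone {f D : ℝ → ℝ}
    (hf : ∀ t : ℝ, 0 ≤ t → HasDerivAt f (D t) t) (hD : ∀ t : ℝ, 0 ≤ t → D t ≤ 0) :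
    ∀ s t : ℝ, 0 ≤ s → s ≤ t → f t ≤ f s := by
  have h := antitoneOn_of_deriv_nonpos (convex_Ici (0:ℝ))
    (fun y hy => (hf y hy).continuousAt.continuousWithinAt)
    (fun y hy => by
      rw [interior_Ici] at hy
      exact (hf y (le_of_lt hy)).differentiableAt.differentiableWithinAt)
    (fun y hy => by
      rw [interior_Ici] at hy
      rw [(hf y hy.le).deriv]; exact hD y hy.le)
  intro s t hs hst
  exact h (Set.mem_Ici.2 hs) (Set.mem_Ici.2 (hs.trans hst)) hst

private lemma siL_hasDerivAt_dotSelf {n : ℕ} {u : ℝ → Fin n → ℝ} {u' : Fin n → ℝ} {t : ℝ}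
    (h : HasDerivAt u u' t) :
    HasDerivAt (fun s => u s ⬝ᵥ u s) (2 * (u t ⬝ᵥ u')) t := by
  have hk : ∀ k, HasDerivAt (fun s => u s k) (u' k) t := fun k => hasDerivAt_pi.1 h k
  have h2 : HasDerivAt (fun s => ∑ k, u s k * u s k)
      (∑ k, (u' k * u t k + u t k * u' k)) t :=
    HasDerivAt.fun_sum fun k _ => (hk k).mul (hk k)
  have he : (∑ k, (u' k * u t k + u t k * u' k)) = 2 * (u t ⬝ᵥ u') := by
    rw [dotProduct, Finset.mul_sum]
    exact Finset.sum_congr rfl fun k _ => by ring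
  rw [← he]; exact h2

private lemma siL_dot_ident {n : ℕ} (p q : Fin n → ℝ) :
    p ⬝ᵥ (p - q) + q ⬝ᵥ (q - p) = (p - q) ⬝ᵥ (p - q) := by
  simp only [dotProduct, Pi.sub_apply, ← Finset.sum_add_distrib]
  exact Finset.sum_congr rfl fun k _ => by ring

private lemma siL_dot_self_nonneg {n : ℕ} (v : Fin n → ℝ) : 0 ≤ v ⬝ᵥ v :=
  Finset.sum_nonneg fun k _ => mul_self_nonneg _

private lemma siL_dotProduct_sum {n : ℕ} {ι : Type*} (s : Finset ι) (u : Fin n → ℝ)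
    (v : ι → Fin n → ℝ) : u ⬝ᵥ (∑ i ∈ s, v i) = ∑ i ∈ s, u ⬝ᵥ v i := by
  simp only [dotProduct, Finset.sum_apply, Finset.mul_sum]
  rw [Finset.sum_comm]

private lemma siL_sum_dotProduct {n : ℕ} {ι : Type*} (s : Finset ι) (u : ι → Fin n → ℝ)
    (v : Fin n → ℝ) : (∑ i ∈ s, u i) ⬝ᵥ v = ∑ i ∈ s, u i ⬝ᵥ v := by
  simp only [dotProduct, Finset.sum_apply, Finset.sum_mul]
  rw [Finset.sum_comm]


/-- Single-integrator special case (`A = 0`, `B = I`, `P = I`, `F = -I`, `Γ = I`):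
under the adaptive protocol `ẋ_i = -Σ_j c_{ij} a_{ij} (x_i - x_j)`,
`ċ_{ij} = κ_{ij} a_{ij} ‖x_i - x_j‖²`, with `G` connected undirected,
`κ_{ij} = κ_{ji} > 0`, `c_{ij}(0) = c_{ji}(0)`, the Lyapunov function
`V(t) = Σ_i ‖x_i - x̄‖² + Σ_{i ≠ j} (c_{ij} - α)²/(2 κ_{ij})` is non-increasing on
`[0, ∞)` whenever `α ≥ 1/λ₂`, where `λ₂` is the smallest nonzero Laplacian
eigenvalue and `x̄ = (1/N) Σ_j x_j`. -/
theorem single_integrator_adaptive_lyapunov_nonincreasing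
    {N n : ℕ} (hN : 0 < N)
    (G : SimpleGraph (Fin N)) [DecidableRel G.Adj] (hconn : G.Connected)
    (κ : Fin N → Fin N → ℝ) (hκpos : ∀ i j, 0 < κ i j)
    (hκsymm : ∀ i j, κ i j = κ j i)
    (c : Fin N → Fin N → ℝ → ℝ) (hc0 : ∀ i j, c i j 0 = c j i 0)
    (x : Fin N → ℝ → Fin n → ℝ)
    (hxode : ∀ i, ∀ t : ℝ, 0 ≤ t →
      HasDerivAt (x i)
        (-(∑ j, (c i j t * G.adjMatrix ℝ i j) • (x i t - x j t))) t)
    (hcode : ∀ i j, ∀ t : ℝ, 0 ≤ t →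
      HasDerivAt (c i j)
        (κ i j * G.adjMatrix ℝ i j * ((x i t - x j t) ⬝ᵥ (x i t - x j t))) t)
    (lam2 : ℝ) (hlam2pos : 0 < lam2)
    (hlam2 : ∀ v : Fin N → ℝ, (∑ i, v i) = 0 →
      lam2 * (v ⬝ᵥ v) ≤ v ⬝ᵥ (G.lapMatrix ℝ).mulVec v)
    (α : ℝ) (hα : 1 / lam2 ≤ α)
    (xbar : ℝ → Fin n → ℝ) (hxbar : ∀ t, xbar t = (N : ℝ)⁻¹ • ∑ j, x j t)
    (V : ℝ → ℝ)
    (hV : ∀ t, V t = (∑ i, (x i t - xbar t) ⬝ᵥ (x i t - xbar t)) +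
      ∑ i, ∑ j ∈ Finset.univ.erase i, (c i j t - α) ^ 2 / (2 * κ i j)) :
    ∀ s t : ℝ, 0 ≤ s → s ≤ t → V t ≤ V s := by
  classical
  have hNne : (N : ℝ) ≠ 0 := Nat.cast_ne_zero.2 hN.ne'
  set a : Fin N → Fin N → ℝ := fun i j => G.adjMatrix ℝ i j with ha
  have hasymm : ∀ i j, a i j = a j i := by
    intro i j; simp only [ha, SimpleGraph.adjMatrix_apply, G.adj_comm]
  have hadiag : ∀ i, a i i = 0 := by intro i; simp [ha]
  have hanonneg : ∀ i j, 0 ≤ a i j := by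
    intro i j; by_cases h : G.Adj i j <;> simp [ha, h]
  set w : Fin N → Fin N → ℝ → ℝ :=
    fun i j t => (x i t - x j t) ⬝ᵥ (x i t - x j t) with hw
  have hwsymm : ∀ i j t, w i j t = w j i t := by
    intro i j t
    simp only [hw]
    rw [show x j t - x i t = -(x i t - x j t) by ring, neg_dotProduct, dotProduct_neg, neg_neg]
  have hwnonneg : ∀ i j t, 0 ≤ w i j t := fun i j t => siL_dot_self_nonneg _
  -- symmetry of c on nonnegative times
  have hcsymm : ∀ i j, ∀ t : ℝ, 0 ≤ t → c i j t = c j i t := by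
    intro i j t ht
    have hzero : ∀ s : ℝ, 0 ≤ s → HasDerivAt (fun r => c i j r - c j i r) 0 s := by
      intro s hs
      have h1 := hcode i j s hs
      have h2 := hcode j i s hs
      have heq : κ i j * a i j * w i j s = κ j i * a j i * w j i s := by
        rw [hκsymm, hasymm, hwsymm]
      have := h1.sub h2
      rw [show κ i j * a i j * w i j s - κ j i * a j i * w j i s = 0 by rw [heq]; ring] at this
      exact this
    have := siL_const_on_Ici hzero t ht
    have h0 : c i j 0 - c j i 0 = 0 := by rw [hc0]; ring
    have : c i j t - c j i t = 0 := by rw [this, h0]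
    linarith
  -- derivative pieces
  set dx : Fin N → ℝ → Fin n → ℝ :=
    fun i t => -(∑ j, (c i j t * a i j) • (x i t - x j t)) with hdx
  set dxb : ℝ → Fin n → ℝ := fun t => (N : ℝ)⁻¹ • ∑ j, dx j t with hdxb
  have hxbarode : ∀ t : ℝ, 0 ≤ t → HasDerivAt xbar (dxb t) t := by
    intro t ht
    have hfun : xbar = fun s => (N : ℝ)⁻¹ • ∑ j, x j s := funext hxbar
    rw [hfun]
    exact (HasDerivAt.fun_sum (fun j _ => hxode j t ht)).const_smul ((N : ℝ)⁻¹)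
  have hsumu : ∀ t, (∑ i, (x i t - xbar t)) = 0 := by
    intro t
    rw [Finset.sum_sub_distrib, Finset.sum_const, Finset.card_univ, Fintype.card_fin,
      hxbar, ← Nat.cast_smul_eq_nsmul ℝ, smul_smul, mul_inv_cancel₀ hNne, one_smul, sub_self]
  -- the derivative of V
  set D : ℝ → ℝ := fun t =>
    (∑ i, 2 * ((x i t - xbar t) ⬝ᵥ (dx i t - dxb t))) +
      ∑ i, ∑ j ∈ Finset.univ.erase i,
        (2 : ℕ) * (c i j t - α) ^ 1 * (κ i j * a i j * w i j t) / (2 * κ i j) with hD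
  have hVode : ∀ t : ℝ, 0 ≤ t → HasDerivAt V (D t) t := by
    intro t ht
    have hfun : V = fun s => (∑ i, (x i s - xbar s) ⬝ᵥ (x i s - xbar s)) +
        ∑ i, ∑ j ∈ Finset.univ.erase i, (c i j s - α) ^ 2 / (2 * κ i j) := funext hV
    rw [hfun, hD]
    apply HasDerivAt.add
    · exact HasDerivAt.fun_sum fun i _ =>
        siL_hasDerivAt_dotSelf ((hxode i t ht).sub (hxbarode t ht))
    · exact HasDerivAt.fun_sum fun i _ => HasDerivAt.fun_sum fun j _ =>
        (((hcode i j t ht).sub_const α).pow 2).div_const (2 * κ i j)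
  -- the derivative is nonpositive
  have hαpos : 0 < α := lt_of_lt_of_le (by positivity) hα
  have hDle : ∀ t : ℝ, 0 ≤ t → D t ≤ 0 := by
    intro t ht
    set u : Fin N → Fin n → ℝ := fun i => x i t - xbar t with hu
    have hud : ∀ i j : Fin N, x i t - x j t = u i - u j := by
      intro i j; simp only [hu]; ring
    -- second sum
    have hterm2 : ∀ i : Fin N, (∑ j ∈ Finset.univ.erase i,
        (2 : ℕ) * (c i j t - α) ^ 1 * (κ i j * a i j * w i j t) / (2 * κ i j)) =
        ∑ j, (c i j t - α) * (a i j * w i j t) := by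
      intro i
      have hstep : ∀ j, (2 : ℕ) * (c i j t - α) ^ 1 * (κ i j * a i j * w i j t) / (2 * κ i j)
          = (c i j t - α) * (a i j * w i j t) := by
        intro j
        have hne := (hκpos i j).ne'
        field_simp
        ring
      rw [Finset.sum_congr rfl fun j _ => hstep j]
      exact Finset.sum_erase _ (by rw [hadiag]; ring)
    -- first sum
    have hfirst : (∑ i, 2 * (u i ⬝ᵥ (dx i t - dxb t))) = ∑ i, 2 * (u i ⬝ᵥ dx i t) := by
      have h1 : ∀ i : Fin N, 2 * (u i ⬝ᵥ (dx i t - dxb t))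
          = 2 * (u i ⬝ᵥ dx i t) - 2 * (u i ⬝ᵥ dxb t) := by
        intro i; rw [dotProduct_sub]; ring
      rw [Finset.sum_congr rfl fun i _ => h1 i, Finset.sum_sub_distrib]
      have h2 : (∑ i, 2 * (u i ⬝ᵥ dxb t)) = 2 * ((∑ i, u i) ⬝ᵥ dxb t) := by
        rw [siL_sum_dotProduct, Finset.mul_sum]
      rw [h2, hsumu t, zero_dotProduct, mul_zero, sub_zero]
    -- expand u i ⬝ᵥ dx i t
    have hexp : ∀ i : Fin N, u i ⬝ᵥ dx i t
        = -∑ j, (c i j t * a i j) * (u i ⬝ᵥ (u i - u j)) := by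
      intro i
      rw [hdx]
      rw [dotProduct_neg, siL_dotProduct_sum]
      congr 1
      refine Finset.sum_congr rfl fun j _ => ?_
      rw [dotProduct_smul, hud i j, smul_eq_mul]
    -- symmetrization
    set b : Fin N → Fin N → ℝ := fun i j => c i j t * a i j with hb
    have hbsymm : ∀ i j, b i j = b j i := by
      intro i j; simp only [hb]; rw [hcsymm i j t ht, hasymm]
    have hsym : (∑ i, ∑ j, b i j * (u i ⬝ᵥ (u i - u j))) * 2
        = ∑ i, ∑ j, b i j * w i j t := by
      have hswap : (∑ i, ∑ j, b i j * (u i ⬝ᵥ (u i - u j)))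
          = ∑ i, ∑ j, b i j * (u j ⬝ᵥ (u j - u i)) := by
        rw [Finset.sum_comm]
        refine Finset.sum_congr rfl fun i _ => Finset.sum_congr rfl fun j _ => ?_
        rw [hbsymm i j]
      calc (∑ i, ∑ j, b i j * (u i ⬝ᵥ (u i - u j))) * 2
          = (∑ i, ∑ j, b i j * (u i ⬝ᵥ (u i - u j)))
            + ∑ i, ∑ j, b i j * (u j ⬝ᵥ (u j - u i)) := by rw [← hswap]; ring
        _ = ∑ i, ∑ j, (b i j * (u i ⬝ᵥ (u i - u j)) + b i j * (u j ⬝ᵥ (u j - u i))) := by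
            rw [← Finset.sum_add_distrib]
            exact Finset.sum_congr rfl fun i _ => (Finset.sum_add_distrib).symm
        _ = ∑ i, ∑ j, b i j * w i j t := by
            refine Finset.sum_congr rfl fun i _ => Finset.sum_congr rfl fun j _ => ?_
            rw [← mul_add, siL_dot_ident]
            congr 1
            show ((x i t - xbar t) - (x j t - xbar t)) ⬝ᵥ ((x i t - xbar t) - (x j t - xbar t))
              = (x i t - x j t) ⬝ᵥ (x i t - x j t)
            rw [hud i j]
    -- put it all together
    have hDval : D t = -(α * ∑ i, ∑ j, a i j * w i j t) := by
      rw [hD]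
      simp only []
      rw [hfirst, Finset.sum_congr rfl fun i _ => hterm2 i]
      rw [Finset.sum_congr rfl fun i _ => by rw [hexp i]]
      have h3 : (∑ i, 2 * (-∑ j, (c i j t * a i j) * (u i ⬝ᵥ (u i - u j))))
          = -((∑ i, ∑ j, b i j * (u i ⬝ᵥ (u i - u j))) * 2) := by
        calc (∑ i, 2 * (-∑ j, (c i j t * a i j) * (u i ⬝ᵥ (u i - u j))))
            = ∑ i, -((∑ j, (c i j t * a i j) * (u i ⬝ᵥ (u i - u j))) * 2) :=
              Finset.sum_congr rfl fun i _ => by ring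
          _ = -(∑ i, (∑ j, (c i j t * a i j) * (u i ⬝ᵥ (u i - u j))) * 2) :=
              Finset.sum_neg_distrib _
          _ = -((∑ i, ∑ j, (c i j t * a i j) * (u i ⬝ᵥ (u i - u j))) * 2) := by
              rw [Finset.sum_mul]
          _ = -((∑ i, ∑ j, b i j * (u i ⬝ᵥ (u i - u j))) * 2) := rfl
      rw [h3, hsym]
      have h4 : (∑ i, ∑ j, (c i j t - α) * (a i j * w i j t))
          = (∑ i, ∑ j, b i j * w i j t) - α * ∑ i, ∑ j, a i j * w i j t := by
        rw [Finset.mul_sum, ← Finset.sum_sub_distrib]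
        refine Finset.sum_congr rfl fun i _ => ?_
        rw [Finset.mul_sum, ← Finset.sum_sub_distrib]
        exact Finset.sum_congr rfl fun j _ => by rw [hb]; ring
      rw [h4]; ring
    rw [hDval, neg_nonpos]
    exact mul_nonneg hαpos.le (Finset.sum_nonneg fun i _ => Finset.sum_nonneg fun j _ =>
      mul_nonneg (hanonneg i j) (hwnonneg i j t))
  exact siL_antitone hVode hDle
end
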